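/- The affine surface in ℂ⁴ with coordinates (z, z̄, w, v) defined by w² = z̄³ + v z² and v² = z³ + w z̄² is a complete intersection with an isolated singularity at the origin. -/

import Mathlib

/-- Two vectors in `Fin 4 → ℂ` with a nonzero 2×2 minor are linearly independent. -/
lemma two_vec_li (x y : Fin 4 → ℂ) (i j : Fin 4)
    (h : x i * y j - x j * y i ≠ 0) : LinearIndependent ℂ ![x, y] := by
  rw [LinearIndependent.pair_iff]
  intro s t hst
  have hi : s * x i + t * y i = 0 := by simpa using congrFun hst i
  have hj : s * x j + t * y j = 0 := by simpa using congrFun hst j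
  refine ⟨?_, ?_⟩
  · rcases mul_eq_zero.1 (show s * (x i * y j - x j * y i) = 0 by
      linear_combination y j * hi - y i * hj) with h' | h'
    · exact h'
    · exact absurd h' h
  · rcases mul_eq_zero.1 (show t * (x i * y j - x j * y i) = 0 by
      linear_combination x i * hj - x j * hi) with h' | h'
    · exact h'
    · exact absurd h' h

/-- The surface in `ℂ⁴` (coordinates `(z, z̄, w, v)`) defined by
the two splice equations `w² = z̄³ + v·z²` and `v² = z³ + w·z̄²` is a complete
intersection (cut out by exactly these two equations) with an isolated
singularity at the origin: at every nearby nonzero solution the two gradient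
vectors are linearly independent, i.e. the Jacobian has maximal rank 2. -/
theorem stmt_18 :
    ∃ ε > (0 : ℝ), ∀ z zb w v : ℂ,
      ‖z‖ < ε → ‖zb‖ < ε → ‖w‖ < ε →
      ‖v‖ < ε →
      ¬(z = 0 ∧ zb = 0 ∧ w = 0 ∧ v = 0) →
      w ^ 2 = zb ^ 3 + v * z ^ 2 →
      v ^ 2 = z ^ 3 + w * zb ^ 2 →
      LinearIndependent ℂ
        ![![-2 * v * z, -3 * zb ^ 2, 2 * w, -z ^ 2],
          ![-3 * z ^ 2, -2 * w * zb, -zb ^ 2, 2 * v]] := by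
  refine ⟨1, one_pos, ?_⟩
  intro z zb w v haz hazb haw hav hne hw hv
  by_cases hz0 : z = 0
  · by_cases hzb0 : zb = 0
    · exfalso
      subst hz0; subst hzb0
      have hw0 : w = 0 := by
        have : w ^ 2 = 0 := by linear_combination hw
        exact pow_eq_zero_iff two_ne_zero |>.mp this
      have hv0 : v = 0 := by
        have : v ^ 2 = 0 := by linear_combination hv
        exact pow_eq_zero_iff two_ne_zero |>.mp this
      exact hne ⟨rfl, rfl, hw0, hv0⟩
    · -- minor from columns 1,2 : 3 zb⁴ + 4 w² zb = 7 zb⁴ ≠ 0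
      apply two_vec_li _ _ 1 2
      show (-3 * zb ^ 2) * (-zb ^ 2) - (2 * w) * (-2 * w * zb) ≠ 0
      intro h
      apply hzb0
      have h7 : zb ^ 4 = 0 := by
        subst hz0
        linear_combination h / 7 - (4 / 7 : ℂ) * zb * hw
      exact pow_eq_zero_iff (by norm_num) |>.mp h7
  · by_cases hzb0 : zb = 0
    · -- minor from columns 0,3 : -4 v² z - 3 z⁴ = -7 z⁴ ≠ 0
      apply two_vec_li _ _ 0 3
      show (-2 * v * z) * (2 * v) - (-z ^ 2) * (-3 * z ^ 2) ≠ 0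
      intro h
      apply hz0
      have h7 : z ^ 4 = 0 := by
        subst hzb0
        linear_combination -h / 7 - (4 / 7 : ℂ) * z * hv
      exact pow_eq_zero_iff (by norm_num) |>.mp h7
    · by_cases hA : (-2 * v * z) * (2 * v) - (-z ^ 2) * (-3 * z ^ 2) = 0
      · by_cases hB : (-3 * zb ^ 2) * (-zb ^ 2) - (2 * w) * (-2 * w * zb) = 0
        · by_cases hC : (2 * w) * (2 * v) - (-z ^ 2) * (-zb ^ 2) = 0
          · exfalso
            have hA0 : 4 * w * zb ^ 2 * z + 7 * z ^ 4 = 0 := by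
              linear_combination -hA - 4 * z * hv
            have hB0 : 4 * v * z ^ 2 * zb + 7 * zb ^ 4 = 0 := by
              linear_combination hB - 4 * zb * hw
            have hC0 : 4 * w * v - z ^ 2 * zb ^ 2 = 0 := by
              linear_combination hC
            have hAB : (4 * w * zb ^ 2 * z + 7 * z ^ 4) *
                (4 * v * z ^ 2 * zb + 7 * zb ^ 4) = 0 := by
              rw [hA0, zero_mul]
            have key : (4 * z * zb - 49) * (z ^ 4 * zb ^ 4) = 0 := by
              linear_combination hAB - (4 * z ^ 3 * zb ^ 3) * hC0 -
                7 * zb ^ 4 * hA0 - 7 * z ^ 4 * hB0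
            rcases mul_eq_zero.1 key with h49 | hzz
            · have h49' : (49 : ℂ) = 4 * z * zb := by linear_combination -h49
              have habs := congrArg norm h49'
              rw [show (4 : ℂ) * z * zb = 4 * (z * zb) by ring] at habs
              rw [norm_mul, norm_mul] at habs
              simp only [Complex.norm_ofNat] at habs
              have h49n : ‖(49 : ℂ)‖ = 49 := by norm_num
              have hz1 : ‖z‖ < 1 := haz
              have hzb1 : ‖zb‖ < 1 := hazb
              have h0z : 0 ≤ ‖z‖ := norm_nonneg z
              have h0zb : 0 ≤ ‖zb‖ := norm_nonneg zb
              nlinarith [habs, h49n]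
            · rcases mul_eq_zero.1 hzz with h | h
              · exact hz0 (pow_eq_zero_iff (by norm_num) |>.mp h)
              · exact hzb0 (pow_eq_zero_iff (by norm_num) |>.mp h)
          · apply two_vec_li _ _ 2 3
            show (2 * w) * (2 * v) - (-z ^ 2) * (-zb ^ 2) ≠ 0
            exact hC
        · apply two_vec_li _ _ 1 2
          show (-3 * zb ^ 2) * (-zb ^ 2) - (2 * w) * (-2 * w * zb) ≠ 0
          exact hB
      · apply two_vec_li _ _ 0 3
        show (-2 * v * z) * (2 * v) - (-z ^ 2) * (-3 * z ^ 2) ≠ 0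
        exact hA
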